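/- If Z = {(Z_i, ω_i)}_{i∈I} and W = {(W_i, ω_i)}_{i∈I} are fusion frames for H with Z_i = U(W_i) for all i, where U ∈ B(H) is invertible, then e(Z) = e(W). -/

import Mathlib

noncomputable section
open scoped ENNReal

/-- `W = {(W i, ω i)}` is a fusion frame for `H`. -/
def IsFusionFrame {H : Type} [NormedAddCommGroup H] [InnerProductSpace ℂ H]
    {ι : Type} (W : ι → Submodule ℂ H) [∀ i, (W i).HasOrthogonalProjection]
    (ω : ι → ℝ) : Prop :=
  (∀ i, 0 < ω i) ∧ ∃ A B : ℝ, 0 < A ∧ A ≤ B ∧ ∀ f : H,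
    (A * ‖f‖ ^ 2 ≤ ∑' i, ω i ^ 2 * ‖((W i).orthogonalProjectionOnto f : H)‖ ^ 2) ∧
    (∑' i, ω i ^ 2 * ‖((W i).orthogonalProjectionOnto f : H)‖ ^ 2 ≤ B * ‖f‖ ^ 2)

/-- `W = {(W i, ω i)}` is a fusion Riesz basis for `H`. -/
def IsFusionRieszBasis {H : Type} [NormedAddCommGroup H] [InnerProductSpace ℂ H]
    {ι : Type} (W : ι → Submodule ℂ H) (ω : ι → ℝ) : Prop :=
  (∀ i, 0 < ω i) ∧ (⨆ i, W i).topologicalClosure = ⊤ ∧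
  ∃ C D : ℝ, 0 < C ∧ C ≤ D ∧ ∀ (s : Finset ι) (f : ∀ i, W i),
    (C * ∑ j ∈ s, ‖(f j : H)‖ ^ 2 ≤ ‖∑ j ∈ s, ω j • (f j : H)‖ ^ 2) ∧
    (‖∑ j ∈ s, ω j • (f j : H)‖ ^ 2 ≤ D * ∑ j ∈ s, ‖(f j : H)‖ ^ 2)

section Aux

variable {H : Type} [NormedAddCommGroup H] [InnerProductSpace ℂ H] {ι : Type}

/-- The `ℓ²` map induced componentwise by a bounded invertible operator `U`. -/
def lpMapAux (W Z : ι → Submodule ℂ H) (U : H ≃L[ℂ] H)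
    (hU : ∀ i, (W i).map (U : H →ₗ[ℂ] H) ≤ Z i) :
    lp (fun i => ↥(W i)) 2 →ₗ[ℂ] lp (fun i => ↥(Z i)) 2 where
  toFun g := ⟨fun i => ⟨U (g i), hU i ⟨g i, (g i).2, rfl⟩⟩, by
    apply memℓp_gen
    have hg : Summable fun i => ‖g i‖ ^ (2:ℝ≥0∞).toReal :=
      (memℓp_gen_iff (by norm_num)).1 (lp.memℓp g)
    refine Summable.of_nonneg_of_le (fun i => ?_) (fun i => ?_)
      (hg.mul_left (‖(U : H →L[ℂ] H)‖ ^ (2:ℝ≥0∞).toReal))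
    · positivity
    · simp only
      rw [← Real.mul_rpow (norm_nonneg _) (norm_nonneg _)]
      apply Real.rpow_le_rpow (norm_nonneg _) ?_ (by norm_num)
      calc ‖(⟨U (g i), _⟩ : Z i)‖ = ‖U (g i : H)‖ := rfl
        _ ≤ ‖(U : H →L[ℂ] H)‖ * ‖(g i : H)‖ := (U : H →L[ℂ] H).le_opNorm _
        _ = ‖(U : H →L[ℂ] H)‖ * ‖g i‖ := rfl⟩
  map_add' g h := by
    apply lp.ext
    funext i
    apply Subtype.ext
    simp [lp.coeFn_add, Pi.add_apply]
    rfl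
  map_smul' c g := by
    apply lp.ext
    funext i
    apply Subtype.ext
    simp [lp.coeFn_smul, Pi.smul_apply]

theorem lpMapAux_apply (W Z : ι → Submodule ℂ H) (U : H ≃L[ℂ] H)
    (hU : ∀ i, (W i).map (U : H →ₗ[ℂ] H) ≤ Z i) (g : lp (fun i => ↥(W i)) 2) (i : ι) :
    ((lpMapAux W Z U hU g i : H)) = U (g i : H) := by simp [lpMapAux]

end Aux

/-- equivalent fusion frames (`Z i = U (W i)` with `U` a bounded
invertible operator) have the same excess. -/
theorem excess_of_equivalent_fusionFrames
    {H : Type} [NormedAddCommGroup H] [InnerProductSpace ℂ H] [CompleteSpace H]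
    {ι : Type} (W Z : ι → Submodule ℂ H)
    [∀ i, CompleteSpace (W i)] [∀ i, CompleteSpace (Z i)] (ω : ι → ℝ)
    (hW : IsFusionFrame W ω) (hZ : IsFusionFrame Z ω)
    (U : H ≃L[ℂ] H)
    (hU : ∀ i, Z i = (W i).map (U : H →ₗ[ℂ] H))
    (TW : lp (fun i => ↥(W i)) 2 →L[ℂ] H)
    (hTW : ∀ g : lp (fun i => ↥(W i)) 2, TW g = ∑' i, ω i • ((g i : H)))
    (TZ : lp (fun i => ↥(Z i)) 2 →L[ℂ] H)
    (hTZ : ∀ g : lp (fun i => ↥(Z i)) 2, TZ g = ∑' i, ω i • ((g i : H))) :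
    Module.rank ℂ (LinearMap.ker (TZ : lp (fun i => ↥(Z i)) 2 →ₗ[ℂ] H)) =
      Module.rank ℂ (LinearMap.ker (TW : lp (fun i => ↥(W i)) 2 →ₗ[ℂ] H)) := by
  have hU1 : ∀ i, (W i).map (U : H →ₗ[ℂ] H) ≤ Z i := fun i => (hU i).ge
  have hU2 : ∀ i, (Z i).map (U.symm : H →ₗ[ℂ] H) ≤ W i := by
    intro i x hx
    obtain ⟨y, hy, rfl⟩ := hx
    rw [hU i] at hy
    obtain ⟨w, hw, rfl⟩ := hy
    simpa using hw
  set Φ := lpMapAux W Z U hU1 with hΦdef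
  set Ψ := lpMapAux Z W U.symm hU2 with hΨdef
  have hΨΦ : ∀ g, Ψ (Φ g) = g := by
    intro g
    apply lp.ext
    funext i
    apply Subtype.ext
    rw [hΨdef, hΦdef]
    simp [lpMapAux_apply]
  have hΦΨ : ∀ g, Φ (Ψ g) = g := by
    intro g
    apply lp.ext
    funext i
    apply Subtype.ext
    rw [hΨdef, hΦdef]
    simp [lpMapAux_apply]
  have key : ∀ g, TZ (Φ g) = U (TW g) := by
    intro g
    rw [hTZ, hTW, ContinuousLinearEquiv.map_tsum]
    refine tsum_congr fun i => ?_
    rw [hΦdef, lpMapAux_apply]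
    exact ((U : H →ₗ[ℂ] H).map_smul_of_tower (ω i) ((g i : H))).symm
  have key2 : ∀ g, TW (Ψ g) = U.symm (TZ g) := by
    intro g
    have := key (Ψ g)
    rw [hΦΨ g] at this
    rw [this]
    simp
  have e : (LinearMap.ker (TW : lp (fun i => ↥(W i)) 2 →ₗ[ℂ] H)) ≃ₗ[ℂ]
      (LinearMap.ker (TZ : lp (fun i => ↥(Z i)) 2 →ₗ[ℂ] H)) :=
    { toFun := fun g => ⟨Φ g, by
        have hg : TW (g : lp (fun i => ↥(W i)) 2) = 0 := g.2
        simp [LinearMap.mem_ker, key, hg]⟩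
      invFun := fun g => ⟨Ψ g, by
        have hg : TZ (g : lp (fun i => ↥(Z i)) 2) = 0 := g.2
        simp [LinearMap.mem_ker, key2, hg]⟩
      map_add' := fun g h => Subtype.ext (map_add Φ _ _)
      map_smul' := fun c g => Subtype.ext (map_smul Φ _ _)
      left_inv := fun g => Subtype.ext (hΨΦ g)
      right_inv := fun g => Subtype.ext (hΦΨ g) }
  exact e.symm.rank_eq
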